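/- arXiv:2309.00078 — 7 statements merged into one kernel-verified Lean document; each statement's English description precedes it below -/
import Mathlib

section
/- For all imaginary octonions p and q with ⟨p,q⟩ = 0, and every octonion x, one has p(qx) = −q(px); equivalently, the left-multiplication operators by p and by q anticommute as ℝ-linear maps on 𝕆. -/
noncomputable section

abbrev H := Quaternion ℝ

/-- The octonions 𝕆, as the Cayley–Dickson double of the quaternions:
pairs (a,b) of quaternions. -/
def Oct : Type := H × H

namespace Oct

instance : AddCommGroup Oct := inferInstanceAs (AddCommGroup (H × H))
instance : Module ℝ Oct := inferInstanceAs (Module ℝ (H × H))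

def mk' (a b : H) : Oct := (a, b)
def fst : Oct → H := Prod.fst
def snd : Oct → H := Prod.snd

/-- Cayley–Dickson multiplication: (a,b)·(c,d) = (ac − conj(d)b, da + b·conj(c)). -/
instance : Mul Oct :=
  ⟨fun p q => mk' (p.fst * q.fst - star q.snd * p.snd) (q.snd * p.fst + p.snd * star q.fst)⟩

instance : One Oct := ⟨mk' 1 0⟩

/-- Octonionic conjugation: conj (a,b) = (conj a, −b). -/
def conj (p : Oct) : Oct := mk' (star p.fst) (-p.snd)

/-- The real part of an octonion, as a real scalar. -/
def re (p : Oct) : ℝ := (p.fst).re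

/-- The bilinear form ⟨x,y⟩ = (x·conj(y) + y·conj(x))/2, a real scalar. -/
def oinner (p q : Oct) : ℝ := re (p * conj q + q * conj p) / 2

/-- The norm N(x) = x·conj(x), a real scalar. -/
def N (p : Oct) : ℝ := re (p * conj p)

/-- An octonion is imaginary if conj x = −x. -/
def IsIm (p : Oct) : Prop := conj p = -p

/-- The embedding of the reals into the octonions. -/
def oR (r : ℝ) : Oct := mk' (algebraMap ℝ H r) 0

lemma mul_mk (a b c d : H) : mk' a b * mk' c d
    = mk' (a * c - star d * b) (d * a + b * star c) := rfl

lemma add_mk (a b c d : H) : mk' a b + mk' c d = mk' (a + c) (b + d) := rfl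

lemma neg_mk (a b : H) : -(mk' a b) = mk' (-a) (-b) := rfl

lemma fst_mk (a b : H) : fst (mk' a b) = a := rfl
lemma snd_mk (a b : H) : snd (mk' a b) = b := rfl
lemma re_mk (a b : H) : re (mk' a b) = a.re := rfl

lemma mk'_congr {a b c d : H} (h1 : a = c) (h2 : b = d) : mk' a b = mk' c d := by
  rw [h1, h2]

lemma eta (p : Oct) : p = mk' (fst p) (snd p) := rfl


end Oct

open Oct

theorem key (a b c d u v : H) (ha : a.re = 0) (hc : c.re = 0)
    (h : oinner (mk' a b) (mk' c d) = 0) :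
    mk' a b * (mk' c d * mk' u v) = -(mk' c d * (mk' a b * mk' u v)) := by
  simp only [oinner, conj, fst_mk, snd_mk, Oct.mul_mk, Oct.add_mk, re_mk,
    Quaternion.re_add, Quaternion.re_mul, Quaternion.re_sub, Quaternion.re_star,
    Quaternion.re_neg, Quaternion.imI_star, Quaternion.imJ_star, Quaternion.imK_star,
    Quaternion.imI_neg, Quaternion.imJ_neg, Quaternion.imK_neg, ha, hc] at h
  have h' := h
  simp only [Oct.mul_mk, Oct.neg_mk]
  refine mk'_congr ?_ ?_ <;> ext <;>
    simp only [Quaternion.re_mul, Quaternion.imI_mul, Quaternion.imJ_mul, Quaternion.imK_mul,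
      Quaternion.re_sub, Quaternion.imI_sub, Quaternion.imJ_sub, Quaternion.imK_sub,
      Quaternion.re_add, Quaternion.imI_add, Quaternion.imJ_add, Quaternion.imK_add,
      Quaternion.re_neg, Quaternion.imI_neg, Quaternion.imJ_neg, Quaternion.imK_neg,
      Quaternion.re_star, Quaternion.imI_star, Quaternion.imJ_star, Quaternion.imK_star,
      ha, hc]
  · linear_combination (-2 * u.re) * h'
  · linear_combination (-2 * u.imI) * h'
  · linear_combination (-2 * u.imJ) * h'
  · linear_combination (-2 * u.imK) * h'
  · linear_combination (-2 * v.re) * h'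
  · linear_combination (-2 * v.imI) * h'
  · linear_combination (-2 * v.imJ) * h'
  · linear_combination (-2 * v.imK) * h'

/-- For all imaginary octonions p and q with ⟨p,q⟩ = 0, and every octonion x,
one has p(qx) = −q(px): the left-multiplication operators by p and q anticommute. -/
theorem leftMul_anticommute (p q : Oct) (hp : IsIm p) (hq : IsIm q)
    (hpq : oinner p q = 0) (x : Oct) :
    p * (q * x) = -(q * (p * x)) := by
  have ha : star (Oct.fst p) = -(Oct.fst p) := congrArg Oct.fst hp
  have hc : star (Oct.fst q) = -(Oct.fst q) := congrArg Oct.fst hq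
  have ha0 : (Oct.fst p).re = 0 := by
    have := congrArg QuaternionAlgebra.re ha
    simp only [Quaternion.re_star, Quaternion.re_neg] at this
    linarith
  have hc0 : (Oct.fst q).re = 0 := by
    have := congrArg QuaternionAlgebra.re hc
    simp only [Quaternion.re_star, Quaternion.re_neg] at this
    linarith
  have hpq' : oinner (mk' (Oct.fst p) (Oct.snd p)) (mk' (Oct.fst q) (Oct.snd q)) = 0 := hpq
  have := key (Oct.fst p) (Oct.snd p) (Oct.fst q) (Oct.snd q) (Oct.fst x) (Oct.snd x)
    ha0 hc0 hpq'
  rw [Oct.eta p, Oct.eta q, Oct.eta x]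
  exact this
end
end

section
/- For all imaginary octonions p and q with ⟨p,q⟩ = 0 and every octonion x, one has p(p(qx)) = p²(qx) and p(q(px)) = −p²(qx). (In the paper's composition notation: p∘(p∘q) = p² q = −(p∘q)∘p.) -/
noncomputable section

open Oct

set_option maxHeartbeats 4000000 in
private lemma comp_ppq_aux (p q : Oct) (hp : IsIm p) (hq : IsIm q)
    (hpq : oinner p q = 0) (x : Oct) :
    p * (p * (q * x)) = (p * p) * (q * x) ∧
    p * (q * (p * x)) = -((p * p) * (q * x)) := by

  have mul_def : ∀ u v : H × H, @HMul.hMul Oct Oct Oct _ u v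
      = (fst u * fst v - star (snd v) * snd u, snd v * fst u + snd u * star (fst v)) :=
    fun _ _ => rfl
  have neg_def : ∀ u : H × H, @Neg.neg Oct _ u = (-(fst u), -(snd u)) := fun _ => rfl
  have add_def : ∀ u v : H × H, @HAdd.hAdd Oct Oct Oct _ u v = (fst u + fst v, snd u + snd v) := fun _ _ => rfl
  have star_def : ∀ y : QuaternionAlgebra ℝ (-1) 0 (-1), @star H _ y = ⟨y.re, -y.imI, -y.imJ, -y.imK⟩ :=
    fun y => (show ∀ y : H, star y = ⟨y.re, -y.imI, -y.imJ, -y.imK⟩ from fun _ => by ext <;> simp) y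
  have qneg : ∀ y : QuaternionAlgebra ℝ (-1) 0 (-1), @Neg.neg H _ y = ⟨-y.re, -y.imI, -y.imJ, -y.imK⟩ := fun _ => rfl
  have qadd : ∀ y z : QuaternionAlgebra ℝ (-1) 0 (-1), @HAdd.hAdd H H H _ y z = ⟨y.re + z.re, y.imI + z.imI, y.imJ + z.imJ, y.imK + z.imK⟩ :=
    fun _ _ => rfl
  have qsub : ∀ y z : QuaternionAlgebra ℝ (-1) 0 (-1), @HSub.hSub H H H _ y z = ⟨y.re - z.re, y.imI - z.imI, y.imJ - z.imJ, y.imK - z.imK⟩ :=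
    fun _ _ => rfl
  have qmul : ∀ y z : QuaternionAlgebra ℝ (-1) 0 (-1), @HMul.hMul H H H _ y z =
      ⟨y.re * z.re - y.imI * z.imI - y.imJ * z.imJ - y.imK * z.imK,
       y.re * z.imI + y.imI * z.re + y.imJ * z.imK - y.imK * z.imJ,
       y.re * z.imJ - y.imI * z.imK + y.imJ * z.re + y.imK * z.imI,
       y.re * z.imK + y.imI * z.imJ - y.imJ * z.imI + y.imK * z.re⟩ := fun y z => (show ∀ y z : H, y * z =
      ⟨y.re * z.re - y.imI * z.imI - y.imJ * z.imJ - y.imK * z.imK,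
       y.re * z.imI + y.imI * z.re + y.imJ * z.imK - y.imK * z.imJ,
       y.re * z.imJ - y.imI * z.imK + y.imJ * z.re + y.imK * z.imI,
       y.re * z.imK + y.imI * z.imJ - y.imJ * z.imI + y.imK * z.re⟩ from fun y z => by
    ext <;> simp [Quaternion.re_mul, Quaternion.imI_mul, Quaternion.imJ_mul, Quaternion.imK_mul]) y z
  obtain ⟨⟨a0,a1,a2,a3⟩,⟨a4,a5,a6,a7⟩⟩ := p
  obtain ⟨⟨b0,b1,b2,b3⟩,⟨b4,b5,b6,b7⟩⟩ := q
  obtain ⟨⟨c0,c1,c2,c3⟩,⟨c4,c5,c6,c7⟩⟩ := x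
  have ha0 : a0 = 0 := by
    have h := congrArg (fun z : Oct => (Prod.fst z).re) hp
    simp [conj, mk', fst, snd, neg_def, star_def, qneg] at h
    linarith
  have hb0 : b0 = 0 := by
    have h := congrArg (fun z : Oct => (Prod.fst z).re) hq
    simp [conj, mk', fst, snd, neg_def, star_def, qneg] at h
    linarith
  subst ha0 hb0
  have hQ : a1*b1 + a2*b2 + a3*b3 + a4*b4 + a5*b5 + a6*b6 + a7*b7 = 0 := by
    simp only [oinner, conj, mk', fst, snd, re, mul_def, add_def, neg_def, star_def,
      qmul, qadd, qsub, qneg] at hpq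
    linear_combination hpq
  refine ⟨?_, ?_⟩
  · refine Prod.ext ?_ ?_ <;> refine QuaternionAlgebra.ext ?_ ?_ ?_ ?_ <;>
      · simp only [mul_def, neg_def, add_def, fst, snd, star_def, qmul, qadd, qsub, qneg]
        ring
  · refine Prod.ext ?_ ?_ <;> refine QuaternionAlgebra.ext ?_ ?_ ?_ ?_
    · simp only [mul_def, neg_def, add_def, fst, snd, star_def, qmul, qadd, qsub, qneg]
      linear_combination (2*(a1*c1 + a2*c2 + a3*c3 + a4*c4 + a5*c5 + a6*c6 + a7*c7)) * hQ
    · simp only [mul_def, neg_def, add_def, fst, snd, star_def, qmul, qadd, qsub, qneg]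
      linear_combination (2*(-a1*c0 - a2*c3 + a3*c2 + a5*c4 - a4*c5 - a7*c6 + a6*c7)) * hQ
    · simp only [mul_def, neg_def, add_def, fst, snd, star_def, qmul, qadd, qsub, qneg]
      linear_combination (2*(a1*c3 - a2*c0 - a3*c1 + a6*c4 + a7*c5 - a4*c6 - a5*c7)) * hQ
    · simp only [mul_def, neg_def, add_def, fst, snd, star_def, qmul, qadd, qsub, qneg]
      linear_combination (2*(-a1*c2 + a2*c1 - a3*c0 + a7*c4 - a6*c5 + a5*c6 - a4*c7)) * hQ
    · simp only [mul_def, neg_def, add_def, fst, snd, star_def, qmul, qadd, qsub, qneg]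
      linear_combination (2*(a1*c5 + a2*c6 + a3*c7 - a4*c0 - a5*c1 - a6*c2 - a7*c3)) * hQ
    · simp only [mul_def, neg_def, add_def, fst, snd, star_def, qmul, qadd, qsub, qneg]
      linear_combination (2*(-a1*c4 - a3*c6 + a2*c7 + a4*c1 - a5*c0 + a6*c3 - a7*c2)) * hQ
    · simp only [mul_def, neg_def, add_def, fst, snd, star_def, qmul, qadd, qsub, qneg]
      linear_combination (2*(-a2*c4 + a3*c5 - a1*c7 + a4*c2 - a5*c3 - a6*c0 + a7*c1)) * hQ
    · simp only [mul_def, neg_def, add_def, fst, snd, star_def, qmul, qadd, qsub, qneg]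
      linear_combination (2*(-a3*c4 - a2*c5 + a1*c6 + a4*c3 + a5*c2 - a6*c1 - a7*c0)) * hQ


/-- For all imaginary octonions p, q with ⟨p,q⟩ = 0 and every octonion x:
p(p(qx)) = p²(qx) and p(q(px)) = −p²(qx), i.e. p∘(p∘q) = p² q = −(p∘q)∘p. -/
theorem comp_ppq (p q : Oct) (hp : IsIm p) (hq : IsIm q)
    (hpq : oinner p q = 0) (x : Oct) :
    p * (p * (q * x)) = (p * p) * (q * x) ∧
    p * (q * (p * x)) = -((p * p) * (q * x)) :=
  comp_ppq_aux p q hp hq hpq x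
end
end

section
/- For every imaginary octonion q and all octonions p, r, x, one has p(q(q(rx))) = q²·(p(rx)), where q² is the real number −N(q). (In the paper's composition notation: (p∘q)∘(q∘r) = q² p∘r.) -/
set_option maxHeartbeats 1000000


noncomputable section

open Oct

attribute [local simp] Quaternion.re_mul Quaternion.imI_mul Quaternion.imJ_mul Quaternion.imK_mul

lemma Oct.mul_def (p q : Oct) : p * q =
    ((p.1 * q.1 - star q.2 * p.2, q.2 * p.1 + p.2 * star q.1) : H × H) := rfl

lemma Oct.smul_def (s : ℝ) (p : Oct) : s • p = ((s • p.1, s • p.2) : H × H) := rfl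

lemma Oct.mul_smul_right (s : ℝ) (p z : Oct) : p * (s • z) = s • (p * z) := by
  erw [Oct.smul_def, Oct.mul_def, Oct.mul_def, Oct.smul_def]
  refine Prod.ext ?_ ?_ <;>
    simp [mul_smul_comm, smul_mul_assoc, smul_sub, smul_add]

lemma Oct.sq_im (q : Oct) (hq : IsIm q) (y : Oct) : q * (q * y) = (-(N q)) • y := by
  have ha : star q.1 = -q.1 := congrArg Prod.fst hq
  have hre : q.1.re = 0 := by
    have h := congrArg QuaternionAlgebra.re ha
    simp at h; linarith
  have hN : N q = (q.1.re^2 + q.1.imI^2 + q.1.imJ^2 + q.1.imK^2)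
      + (q.2.re^2 + q.2.imI^2 + q.2.imJ^2 + q.2.imK^2) := by
    show (q * conj q).1.re = _
    rw [Oct.mul_def]
    simp [conj, mk', Oct.fst, Oct.snd]
    ring
  rw [Oct.mul_def, Oct.mul_def, Oct.smul_def, hN]
  refine Prod.ext ?_ ?_ <;>
  · ext <;>
    · simp only [Quaternion.re_mul, Quaternion.imI_mul, Quaternion.imJ_mul, Quaternion.imK_mul,
        Quaternion.re_sub, Quaternion.imI_sub, Quaternion.imJ_sub, Quaternion.imK_sub,
        Quaternion.re_add, Quaternion.imI_add, Quaternion.imJ_add, Quaternion.imK_add,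
        Quaternion.re_neg, Quaternion.imI_neg, Quaternion.imJ_neg, Quaternion.imK_neg,
        Quaternion.re_star, Quaternion.imI_star, Quaternion.imJ_star, Quaternion.imK_star,
        Quaternion.re_smul, Quaternion.imI_smul, Quaternion.imJ_smul, Quaternion.imK_smul,
        smul_eq_mul, hre]
      ring

/-- For every imaginary octonion q and all octonions p, r, x:
p(q(q(rx))) = q²·(p(rx)), where q² is the real number −N(q).
(In composition notation: (p∘q)∘(q∘r) = q² p∘r.) -/
theorem comp_pqqr (q : Oct) (hq : IsIm q) (p r x : Oct) :
    p * (q * (q * (r * x))) = (-(N q)) • (p * (r * x)) := by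
  rw [Oct.sq_im q hq (r * x), Oct.mul_smul_right]
end
end

section
/- For every octonion q, every z ∈ ℝ and a ∈ 𝕆, one has [X_q, P(z,a)] = P(2⟨q,a⟩, −2zq). Consequently ad_{X_q} maps V into V and is skew-adjoint with respect to the quadratic form P(z,a) ↦ z² + N(a); moreover, if q is imaginary with N(q) = 1, then ad_{X_q} annihilates every P(0,a) with ⟨a,q⟩ = 0 and sends P(0,q) ↦ 2·P(1,0) and P(1,0) ↦ −2·P(0,q), i.e. it is an infinitesimal rotation in the (q,z)-plane. -/
noncomputable section

open Oct

abbrev M2 := Matrix (Fin 2) (Fin 2) Oct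

/-- The traceless Hermitian 2×2 matrix P(z,a) = !![z, a; conj a, −z]. -/
def Pm (z : ℝ) (a : Oct) : M2 := !![oR z, a; conj a, -oR z]

/-- The off-diagonal anti-Hermitian generator X_q = !![0, q; −conj q, 0]. -/
def Xm (q : Oct) : M2 := !![0, q; -conj q, 0]

/-- The diagonal generator D_q = !![q, 0; 0, −q]. -/
def Dm (q : Oct) : M2 := !![q, 0; 0, -q]

/-- The adjoint action ad_A : P ↦ AP − PA (entrywise octonion multiplication). -/
def ad (A : M2) : M2 → M2 := fun P => A * P - P * A

/-- The bracket of operators, [S,T] = S∘T − T∘S. -/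
def br (S T : M2 → M2) : M2 → M2 := fun P => S (T P) - T (S P)


namespace Oct

lemma ext' {p q : Oct} (h1 : p.fst = q.fst) (h2 : p.snd = q.snd) : p = q := by
  cases p; cases q; exact Prod.ext h1 h2

@[simp] lemma mul_fst (p q : Oct) : (p*q).fst = p.fst*q.fst - star q.snd * p.snd := rfl
@[simp] lemma mul_snd (p q : Oct) : (p*q).snd = q.snd * p.fst + p.snd * star q.fst := rfl
@[simp] lemma add_fst (p q : Oct) : (p+q).fst = p.fst + q.fst := rfl
@[simp] lemma add_snd (p q : Oct) : (p+q).snd = p.snd + q.snd := rfl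
@[simp] lemma sub_fst (p q : Oct) : (p-q).fst = p.fst - q.fst := rfl
@[simp] lemma sub_snd (p q : Oct) : (p-q).snd = p.snd - q.snd := rfl
@[simp] lemma neg_fst (p : Oct) : (-p).fst = -p.fst := rfl
@[simp] lemma neg_snd (p : Oct) : (-p).snd = -p.snd := rfl
@[simp] lemma smul_fst (r : ℝ) (p : Oct) : (r • p).fst = r • p.fst := rfl
@[simp] lemma smul_snd (r : ℝ) (p : Oct) : (r • p).snd = r • p.snd := rfl
@[simp] lemma zero_fst : (0 : Oct).fst = 0 := rfl
@[simp] lemma zero_snd : (0 : Oct).snd = 0 := rfl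
@[simp] lemma one_fst : (1 : Oct).fst = 1 := rfl
@[simp] lemma one_snd : (1 : Oct).snd = 0 := rfl
@[simp] lemma conj_fst (p : Oct) : (conj p).fst = star p.fst := rfl
@[simp] lemma conj_snd (p : Oct) : (conj p).snd = -p.snd := rfl
@[simp] lemma oR_fst (r : ℝ) : (oR r).fst = algebraMap ℝ H r := rfl
@[simp] lemma oR_snd (r : ℝ) : (oR r).snd = 0 := rfl
@[simp] lemma re_def (p : Oct) : re p = p.fst.re := rfl

@[simp] lemma oR_zero : oR 0 = 0 := by apply ext' <;> simp
@[simp] lemma conj_zero : conj (0 : Oct) = 0 := by apply ext' <;> simp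

lemma oinner_comm (p q : Oct) : oinner p q = oinner q p := by
  simp only [oinner, re_def, add_fst, Quaternion.re_add]
  ring

lemma oinner_smul_left (r : ℝ) (p q : Oct) : oinner (r • p) q = r * oinner p q := by
  simp only [oinner, re_def, add_fst, mul_fst, conj_fst, conj_snd, smul_fst, smul_snd,
    star_neg, star_smul, star_star, neg_neg,
    Quaternion.re_mul, Quaternion.re_star, Quaternion.imI_star,
    Quaternion.imJ_star, Quaternion.imK_star,
    Quaternion.re_sub, Quaternion.re_add, Quaternion.re_neg,
    Quaternion.re_smul,
    Quaternion.imI_smul, Quaternion.imJ_smul, Quaternion.imK_smul,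
    Quaternion.imI_neg, Quaternion.imJ_neg, Quaternion.imK_neg,
    smul_eq_mul]
  ring

lemma oinner_zero_right (p : Oct) : oinner p 0 = 0 := by
  simp [oinner, Quaternion.re_mul, Quaternion.re_zero]

lemma oinner_self (p : Oct) : oinner p p = N p := by
  simp only [oinner, N, re_def, add_fst, Quaternion.re_add]
  ring

end Oct

lemma Pm_inj {z z' : ℝ} {a a' : Oct} (h : Pm z a = Pm z' a') : z = z' ∧ a = a' := by
  have h1 := congrFun (congrFun h 0) 0
  have h2 := congrFun (congrFun h 0) 1
  simp only [Pm, Matrix.cons_val', Matrix.cons_val_zero, Matrix.cons_val_one,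
    Matrix.head_cons, Matrix.empty_val', Matrix.cons_val_fin_one, Matrix.head_fin_const] at h1 h2
  refine ⟨?_, h2⟩
  have := congrArg (fun x : Oct => x.fst.re) h1
  simpa using this

lemma key_s3 (q : Oct) (z : ℝ) (a : Oct) :
    ad (Xm q) (Pm z a) = Pm (2 * oinner q a) ((-(2 * z)) • q) := by
  ext i j
  fin_cases i <;> fin_cases j <;>
    · simp only [ad, Xm, Pm, Matrix.sub_apply, Matrix.mul_apply, Fin.sum_univ_two,
        Matrix.of_apply, Matrix.cons_val', Matrix.cons_val_zero, Matrix.cons_val_one, Matrix.head_cons,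
        Matrix.empty_val', Matrix.cons_val_fin_one, Matrix.head_fin_const, Fin.isValue,
        Fin.zero_eta, Fin.mk_one]
      apply Oct.ext' <;>
        · ext <;>
            simp only [oinner, Oct.re_def, Oct.mul_fst, Oct.mul_snd, Oct.add_fst, Oct.add_snd,
              Oct.sub_fst, Oct.sub_snd, Oct.neg_fst, Oct.neg_snd, Oct.smul_fst, Oct.smul_snd,
              Oct.zero_fst, Oct.zero_snd, Oct.conj_fst, Oct.conj_snd, Oct.oR_fst, Oct.oR_snd,
              star_zero, star_neg, star_star, neg_neg, neg_zero, mul_zero, zero_mul,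
              sub_zero, zero_sub, add_zero, zero_add,
              Quaternion.re_mul, Quaternion.imI_mul, Quaternion.imJ_mul, Quaternion.imK_mul,
              Quaternion.re_star, Quaternion.imI_star, Quaternion.imJ_star, Quaternion.imK_star,
              Quaternion.re_sub, Quaternion.imI_sub, Quaternion.imJ_sub,
              Quaternion.imK_sub, Quaternion.re_add, Quaternion.imI_add,
              Quaternion.imJ_add, Quaternion.imK_add, Quaternion.re_neg,
              Quaternion.imI_neg, Quaternion.imJ_neg, Quaternion.imK_neg,
              Quaternion.re_smul, Quaternion.imI_smul, Quaternion.imJ_smul,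
              Quaternion.imK_smul, Quaternion.re_zero, Quaternion.imI_zero,
              Quaternion.imJ_zero, Quaternion.imK_zero,
              Quaternion.algebraMap_def, Quaternion.re_coe, Quaternion.imI_coe,
              Quaternion.imJ_coe, Quaternion.imK_coe, smul_eq_mul] <;>
            ring

/-- For every octonion q and every z ∈ ℝ, a ∈ 𝕆: [X_q, P(z,a)] = P(2⟨q,a⟩, −2zq).
Consequently ad_{X_q} maps V into V and is skew-adjoint with respect to the
quadratic form P(z,a) ↦ z² + N(a) (whose polar form is (z,a),(z',a') ↦ zz' + ⟨a,a'⟩);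
moreover, if q is imaginary with N(q) = 1, then ad_{X_q} annihilates every P(0,a)
with ⟨a,q⟩ = 0 and sends P(0,q) ↦ 2·P(1,0) and P(1,0) ↦ −2·P(0,q),
i.e. it is an infinitesimal rotation in the (q,z)-plane. -/
theorem adX_on_V (q : Oct) :
    (∀ (z : ℝ) (a : Oct), ad (Xm q) (Pm z a) = Pm (2 * oinner q a) ((-(2 * z)) • q)) ∧
    (∀ (z : ℝ) (a : Oct), ∃ (z' : ℝ) (a' : Oct), ad (Xm q) (Pm z a) = Pm z' a') ∧
    (∀ (z z' w w' : ℝ) (a a' b b' : Oct),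
      ad (Xm q) (Pm z a) = Pm w b → ad (Xm q) (Pm z' a') = Pm w' b' →
      (w * z' + oinner b a') + (z * w' + oinner a b') = 0) ∧
    (IsIm q → N q = 1 →
      (∀ a : Oct, oinner a q = 0 → ad (Xm q) (Pm 0 a) = 0) ∧
      ad (Xm q) (Pm 0 q) = (2 : ℝ) • Pm 1 0 ∧
      ad (Xm q) (Pm 1 0) = (-2 : ℝ) • Pm 0 q) := by
  refine ⟨key_s3 q, fun z a => ⟨_, _, key_s3 q z a⟩, ?_, ?_⟩
  · intro z z' w w' a a' b b' h h'
    obtain ⟨hw, hb⟩ := Pm_inj ((key_s3 q z a).symm.trans h)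
    obtain ⟨hw', hb'⟩ := Pm_inj ((key_s3 q z' a').symm.trans h')
    subst hw hb hw' hb'
    rw [oinner_smul_left, oinner_comm a, oinner_smul_left]
    ring
  · intro him hn
    refine ⟨?_, ?_, ?_⟩
    · intro a ha
      rw [key_s3]
      have h0 : oinner q a = 0 := (oinner_comm q a).trans ha
      ext i j; fin_cases i <;> fin_cases j <;> simp [Pm, h0]
    · rw [key_s3, oinner_self, hn]
      ext i j; fin_cases i <;> fin_cases j <;>
        simp only [Pm, Matrix.of_apply, Matrix.smul_apply, Matrix.cons_val', Matrix.cons_val_zero,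
            Matrix.cons_val_one, Matrix.head_cons, Matrix.empty_val',
            Matrix.cons_val_fin_one, Matrix.head_fin_const, Fin.isValue, Fin.zero_eta,
            Fin.mk_one, smul_zero, smul_neg, Oct.conj_zero, neg_zero, mul_one]
      all_goals first
        | rfl
        | (apply Oct.ext' <;> ext <;> simp [Quaternion.re_one, Quaternion.imI_one, Quaternion.imJ_one, Quaternion.imK_one])
    · rw [key_s3, oinner_zero_right]
      ext i j; fin_cases i <;> fin_cases j <;>
        simp only [Pm, Matrix.of_apply, Matrix.smul_apply, Matrix.cons_val', Matrix.cons_val_zero,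
            Matrix.cons_val_one, Matrix.head_cons, Matrix.empty_val',
            Matrix.cons_val_fin_one, Matrix.head_fin_const, Fin.isValue, Fin.zero_eta,
            Fin.mk_one, mul_zero, Oct.oR_zero, neg_zero, smul_zero, mul_one]
      all_goals first
        | rfl
        | (apply Oct.ext' <;> ext <;> simp)
end
end

section
/- For every imaginary octonion p, one has [ad_{X_1}, ad_{D_p}] = −2·ad_{X_p} and [ad_{X_p}, ad_{D_p}] = 2·N(p)·ad_{X_1} as ℝ-linear operators on V (so in particular [X_p, D_p] acts as 2X_1 when N(p) = 1). -/
noncomputable section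

open Oct

lemma mk2_mul (x y w v e f g h : Oct) :
    (!![x,y;w,v] : M2) * !![e,f;g,h] = !![x*e+y*g, x*f+y*h; w*e+v*g, w*f+v*h] := by
  ext i j; fin_cases i <;> fin_cases j <;> simp [Matrix.mul_apply, Fin.sum_univ_two]

lemma mk2_sub (x y w v e f g h : Oct) :
    (!![x,y;w,v] : M2) - !![e,f;g,h] = !![x-e, y-f; w-g, v-h] := by
  ext i j; fin_cases i <;> fin_cases j <;> simp

lemma mk2_smul (r : ℝ) (x y w v : Oct) :
    r • (!![x,y;w,v] : M2) = !![r•x, r•y; r•w, r•v] := by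
  ext i j; fin_cases i <;> fin_cases j <;> simp

lemma mk2_inj (x y w v e f g h : Oct) :
    (!![x,y;w,v] : M2) = !![e,f;g,h] ↔ x = e ∧ y = f ∧ w = g ∧ v = h := by
  constructor
  · intro hh
    exact ⟨congrFun (congrFun hh 0) 0, congrFun (congrFun hh 0) 1,
      congrFun (congrFun hh 1) 0, congrFun (congrFun hh 1) 1⟩
  · rintro ⟨rfl, rfl, rfl, rfl⟩; rfl

lemma pair_eq (a b : H) : (Prod.mk a b : Oct) = mk' a b := rfl
lemma omul (a b c d : H) : mk' a b * mk' c d =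
    mk' (a*c - star d * b) (d*a + b*star c) := rfl
lemma oadd (a b c d : H) : mk' a b + mk' c d = mk' (a+c) (b+d) := rfl
lemma osub (a b c d : H) : mk' a b - mk' c d = mk' (a-c) (b-d) := rfl
lemma oneg (a b : H) : -(mk' a b) = mk' (-a) (-b) := rfl
lemma osmul (r : ℝ) (a b : H) : r • mk' a b = mk' (r•a) (r•b) := rfl
lemma oconj (a b : H) : conj (mk' a b) = mk' (star a) (-b) := rfl
lemma oone : (1 : Oct) = mk' 1 0 := rfl
lemma ozero : (0 : Oct) = mk' 0 0 := rfl
lemma ooR (r : ℝ) : oR r = mk' (algebraMap ℝ H r) 0 := rfl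
lemma ore (a b : H) : Oct.re (mk' a b) = a.re := rfl
lemma oinj (a b c d : H) : mk' a b = mk' c d ↔ a = c ∧ b = d := Prod.ext_iff

set_option maxHeartbeats 4000000 in

/-- For every imaginary octonion p: [ad_{X_1}, ad_{D_p}] = −2·ad_{X_p} and
[ad_{X_p}, ad_{D_p}] = 2·N(p)·ad_{X_1} as operators on V (so [X_p, D_p] acts
as 2X_1 when N(p) = 1). -/
theorem bracket_with_Dp (p : Oct) (hp : IsIm p) :
    ∀ (z : ℝ) (a : Oct),
      br (ad (Xm 1)) (ad (Dm p)) (Pm z a) = (-2 : ℝ) • ad (Xm p) (Pm z a) ∧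
      br (ad (Xm p)) (ad (Dm p)) (Pm z a) = (2 * N p) • ad (Xm 1) (Pm z a) := by
  obtain ⟨p1, p2⟩ := p
  have h1 : star p1 = -p1 := congrArg Oct.fst hp
  have hre : p1.re = 0 := by
    have := congrArg QuaternionAlgebra.re h1
    simp at this; linarith
  intro z a
  obtain ⟨a1, a2⟩ := a
  constructor <;>
  · simp only [br, ad, Pm, Xm, Dm, N, pair_eq, oone, ozero, ooR, oconj, oneg, mk2_mul, mk2_sub,
      mk2_smul, omul, oadd, osub, osmul, ore, mk2_inj, oinj, Quaternion.algebraMap_def]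
    simp only [star_zero, star_one, star_star, mul_zero, zero_mul, mul_one, one_mul,
      neg_zero, neg_neg, sub_zero, zero_sub, add_zero, zero_add, Quaternion.star_coe, h1]
    refine ⟨⟨?_,?_⟩,⟨?_,?_⟩,⟨?_,?_⟩,⟨?_,?_⟩⟩ <;>
    · ext <;>
      · simp only [hre, Quaternion.re_mul, Quaternion.imI_mul,
          Quaternion.imJ_mul, Quaternion.imK_mul, Quaternion.re_add, Quaternion.imI_add,
          Quaternion.imJ_add, Quaternion.imK_add, Quaternion.re_sub, Quaternion.imI_sub,
          Quaternion.imJ_sub, Quaternion.imK_sub, Quaternion.re_neg, Quaternion.imI_neg,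
          Quaternion.imJ_neg, Quaternion.imK_neg, Quaternion.re_star, Quaternion.imI_star,
          Quaternion.imJ_star, Quaternion.imK_star, Quaternion.re_smul, Quaternion.imI_smul,
          Quaternion.imJ_smul, Quaternion.imK_smul,
          Quaternion.re_one, Quaternion.imI_one, Quaternion.imJ_one, Quaternion.imK_one,
          Quaternion.re_zero, Quaternion.imI_zero, Quaternion.imJ_zero, Quaternion.imK_zero,
          Quaternion.re_coe, Quaternion.imI_coe,
          Quaternion.imJ_coe, Quaternion.imK_coe, smul_eq_mul]
        ring
end
end

section
/- For all imaginary octonions p, q with ⟨p,q⟩ = 0, one has [ad_{D_p}, ad_{D_q}] = [ad_{X_p}, ad_{X_q}] as ℝ-linear operators on V (the paper's relation [D_p, D_q] = 2 D_{p,q} = [X_p, X_q]). -/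
noncomputable section

open Oct

section OctAuxLemmas

theorem fst_mul (x y : Oct) : Oct.fst (x * y) = Oct.fst x * Oct.fst y - star (Oct.snd y) * Oct.snd x := rfl
theorem snd_mul (x y : Oct) : Oct.snd (x * y) = Oct.snd y * Oct.fst x + Oct.snd x * star (Oct.fst y) := rfl
theorem fst_conj (x : Oct) : Oct.fst (Oct.conj x) = star (Oct.fst x) := rfl
theorem snd_conj (x : Oct) : Oct.snd (Oct.conj x) = -Oct.snd x := rfl
theorem fst_neg (x : Oct) : Oct.fst (-x) = -Oct.fst x := rfl
theorem snd_neg (x : Oct) : Oct.snd (-x) = -Oct.snd x := rfl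
theorem fst_add (x y : Oct) : Oct.fst (x + y) = Oct.fst x + Oct.fst y := rfl
theorem snd_add (x y : Oct) : Oct.snd (x + y) = Oct.snd x + Oct.snd y := rfl
theorem fst_sub (x y : Oct) : Oct.fst (x - y) = Oct.fst x - Oct.fst y := rfl
theorem snd_sub (x y : Oct) : Oct.snd (x - y) = Oct.snd x - Oct.snd y := rfl
theorem fst_zero : Oct.fst 0 = 0 := rfl
theorem snd_zero : Oct.snd 0 = 0 := rfl
theorem fst_oR (r : ℝ) : Oct.fst (oR r) = algebraMap ℝ H r := rfl
theorem snd_oR (r : ℝ) : Oct.snd (oR r) = 0 := rfl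
theorem amap_re (r : ℝ) : (algebraMap ℝ H r).re = r := rfl
theorem amap_imI (r : ℝ) : (algebraMap ℝ H r).imI = 0 := rfl
theorem amap_imJ (r : ℝ) : (algebraMap ℝ H r).imJ = 0 := rfl
theorem amap_imK (r : ℝ) : (algebraMap ℝ H r).imK = 0 := rfl
theorem oct_ext {x y : Oct} (h1 : Oct.fst x = Oct.fst y) (h2 : Oct.snd x = Oct.snd y) : x = y :=
  Prod.ext h1 h2
theorem oct_zero_mul (x : Oct) : (0 : Oct) * x = 0 := by
  refine oct_ext ?_ ?_ <;> simp [fst_mul, snd_mul, fst_zero, snd_zero]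
theorem oct_mul_zero (x : Oct) : x * (0 : Oct) = 0 := by
  refine oct_ext ?_ ?_ <;> simp [fst_mul, snd_mul, fst_zero, snd_zero]
theorem msub_fin_two {a b c d e f g h : Oct} :
    !![a,b;c,d] - !![e,f;g,h] = !![a-e,b-f;c-g,d-h] := by
  refine Matrix.ext fun i j => ?_
  fin_cases i <;> fin_cases j <;> rfl

end OctAuxLemmas

set_option maxHeartbeats 4000000 in
/-- For all imaginary octonions p, q with ⟨p,q⟩ = 0:
[ad_{D_p}, ad_{D_q}] = [ad_{X_p}, ad_{X_q}] as operators on V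
(the relation [D_p, D_q] = 2 D_{p,q} = [X_p, X_q]). -/
theorem bracket_Dp_Dq (p q : Oct) (hp : IsIm p) (hq : IsIm q) (hpq : oinner p q = 0) :
    ∀ (z : ℝ) (a : Oct),
      br (ad (Dm p)) (ad (Dm q)) (Pm z a) = br (ad (Xm p)) (ad (Xm q)) (Pm z a) := by
  have hp' : star (Oct.fst p) = -Oct.fst p := congrArg Oct.fst hp
  have hq' : star (Oct.fst q) = -Oct.fst q := congrArg Oct.fst hq
  have hp1 : (Oct.fst p).re = 0 := by
    have := congrArg QuaternionAlgebra.re hp'; simp at this; linarith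
  have hq1 : (Oct.fst q).re = 0 := by
    have := congrArg QuaternionAlgebra.re hq'; simp at this; linarith
  intro z a
  simp only [br, ad, Dm, Xm, Pm, Matrix.mul_fin_two, msub_fin_two,
    oct_zero_mul, oct_mul_zero, add_zero, zero_add, sub_zero, zero_sub, neg_neg, neg_zero]
  refine Matrix.ext fun i j => ?_
  fin_cases i <;> fin_cases j <;>
  · simp only [Fin.zero_eta, Fin.mk_one, Matrix.of_apply, Matrix.cons_val',
      Matrix.cons_val_zero, Matrix.cons_val_one,
      Matrix.head_cons, Matrix.empty_val', Matrix.cons_val_fin_one, Matrix.head_fin_const]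
    refine oct_ext ?_ ?_ <;>
      simp only [fst_mul, snd_mul, fst_conj, snd_conj, fst_neg, snd_neg, fst_add, snd_add,
        fst_sub, snd_sub, fst_zero, snd_zero, fst_oR, snd_oR,
        amap_re, amap_imI, amap_imJ, amap_imK,
        Quaternion.ext_iff, Quaternion.re_mul, Quaternion.imI_mul, Quaternion.imJ_mul,
        Quaternion.imK_mul, Quaternion.re_star, Quaternion.imI_star, Quaternion.imJ_star,
        Quaternion.imK_star, Quaternion.re_neg, Quaternion.imI_neg, Quaternion.imJ_neg,
        Quaternion.imK_neg, Quaternion.re_add, Quaternion.imI_add, Quaternion.imJ_add,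
        Quaternion.imK_add, Quaternion.re_sub, Quaternion.imI_sub, Quaternion.imJ_sub,
        Quaternion.imK_sub, Quaternion.re_zero, Quaternion.imI_zero, Quaternion.imJ_zero,
        Quaternion.imK_zero, Quaternion.re_coe, Quaternion.imI_coe, Quaternion.imJ_coe,
        Quaternion.imK_coe, star_zero, hp1, hq1] <;>
      first
        | exact ⟨by ring, by ring, by ring, by ring⟩
        | ring
        | rfl
end
end

section
/- Let u, v, u′, v′ be imaginary octonions with N(u) = N(v) = N(u′) = N(v′) = 1, ⟨u,v⟩ = 0, ⟨u′,v′⟩ = 0, and uv = u′v′. Define the ℝ-linear map T : 𝕆 → 𝕆 by T(x) = ⟨u,x⟩v − ⟨v,x⟩u − ⟨u′,x⟩v′ + ⟨v′,x⟩u′ (the difference of the rotation generators in the (u,v)- and (u′,v′)-planes). Then T is a derivation of the octonions: T(xy) = T(x)y + x·T(y) for all x, y ∈ 𝕆. (This expresses that the elements A_p and G_p built from pairs of units with a common product lie in g₂ = der(𝕆).) -/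
noncomputable section

open Oct

lemma omul_def (a b c d : H) :
    @HMul.hMul Oct Oct Oct instHMul (a, b) (c, d) =
      ((a * c - star d * b, d * a + b * star c) : H × H) := rfl

lemma oconj_def (a b : H) : conj (a, b) = ((star a, -b) : H × H) := rfl

lemma ore_def (a b : H) : re ((a, b) : Oct) = a.re := rfl

lemma oneg_def (a b : H) : @Neg.neg Oct _ (a, b) = ((-a, -b) : H × H) := rfl

lemma oadd_def (a b c d : H) :
    @HAdd.hAdd Oct Oct Oct instHAdd (a, b) (c, d) = ((a + c, b + d) : H × H) := rfl

lemma osub_def (a b c d : H) :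
    @HSub.hSub Oct Oct Oct instHSub (a, b) (c, d) = ((a - c, b - d) : H × H) := rfl

lemma osmul_def (r : ℝ) (a b : H) :
    @HSMul.hSMul ℝ Oct Oct instHSMul r (a, b) = ((r • a, r • b) : H × H) := rfl

lemma oeq_iff (a b c d : H) :
    @Eq Oct (a, b) (c, d) ↔
      (a.re = c.re ∧ a.imI = c.imI ∧ a.imJ = c.imJ ∧ a.imK = c.imK) ∧
        (b.re = d.re ∧ b.imI = d.imI ∧ b.imJ = d.imJ ∧ b.imK = d.imK) := by
  constructor
  · intro h
    exact ⟨⟨congrArg (fun p : Oct => (Prod.fst p).re) h,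
        congrArg (fun p : Oct => (Prod.fst p).imI) h,
        congrArg (fun p : Oct => (Prod.fst p).imJ) h,
        congrArg (fun p : Oct => (Prod.fst p).imK) h⟩,
      congrArg (fun p : Oct => (Prod.snd p).re) h,
      congrArg (fun p : Oct => (Prod.snd p).imI) h,
      congrArg (fun p : Oct => (Prod.snd p).imJ) h,
      congrArg (fun p : Oct => (Prod.snd p).imK) h⟩
  · rintro ⟨⟨h1, h2, h3, h4⟩, h5, h6, h7, h8⟩
    have e1 : a = c := Quaternion.ext _ _ h1 h2 h3 h4
    have e2 : b = d := Quaternion.ext _ _ h5 h6 h7 h8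
    rw [e1, e2]

lemma isim_re {a b : H} (h : IsIm ((a, b) : Oct)) : a.re = 0 := by
  have h1 := congrArg (fun p : Oct => re p) h
  simp only [oconj_def, oneg_def, ore_def, Quaternion.re_star, Quaternion.re_neg] at h1
  linarith

def qH (q : QuaternionAlgebra ℝ (-1) 0 (-1)) : H := q

lemma oct_mk_qH (a0 a1 a2 a3 b0 b1 b2 b3 : ℝ) :
    @Prod.mk H H (⟨a0, a1, a2, a3⟩ : QuaternionAlgebra ℝ (-1) 0 (-1))
      (⟨b0, b1, b2, b3⟩ : QuaternionAlgebra ℝ (-1) 0 (-1)) =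
      @Prod.mk H H (qH ⟨a0, a1, a2, a3⟩) (qH ⟨b0, b1, b2, b3⟩) := rfl

lemma qH_re (a b c d : ℝ) : (qH ⟨a, b, c, d⟩).re = a := rfl
lemma qH_imI (a b c d : ℝ) : (qH ⟨a, b, c, d⟩).imI = b := rfl
lemma qH_imJ (a b c d : ℝ) : (qH ⟨a, b, c, d⟩).imJ = c := rfl
lemma qH_imK (a b c d : ℝ) : (qH ⟨a, b, c, d⟩).imK = d := rfl

set_option maxHeartbeats 4000000 in
/-- Let u, v, u′, v′ be imaginary octonions with N(u) = N(v) = N(u′) = N(v′) = 1,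
⟨u,v⟩ = 0, ⟨u′,v′⟩ = 0, and uv = u′v′.  Define T : 𝕆 → 𝕆 by
T(x) = ⟨u,x⟩v − ⟨v,x⟩u − ⟨u′,x⟩v′ + ⟨v′,x⟩u′ (the difference of the rotation
generators in the (u,v)- and (u′,v′)-planes).  Then T is a derivation of the
octonions: T(xy) = T(x)y + x·T(y) for all x, y ∈ 𝕆. -/
theorem rotation_difference_is_derivation (u v u' v' : Oct)
    (hu : IsIm u) (hv : IsIm v) (hu' : IsIm u') (hv' : IsIm v')
    (nu : N u = 1) (nv : N v = 1) (nu' : N u' = 1) (nv' : N v' = 1)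
    (huv : oinner u v = 0) (huv' : oinner u' v' = 0)
    (hprod : u * v = u' * v')
    (T : Oct → Oct)
    (hT : ∀ x, T x = oinner u x • v - oinner v x • u
                    - oinner u' x • v' + oinner v' x • u') :
    ∀ x y : Oct, T (x * y) = T x * y + x * T y := by
  intro x y
  rw [hT (x * y), hT x, hT y]
  obtain ⟨⟨u0,u1,u2,u3⟩,⟨u4,u5,u6,u7⟩⟩ := u
  obtain ⟨⟨v0,v1,v2,v3⟩,⟨v4,v5,v6,v7⟩⟩ := v
  obtain ⟨⟨w0,w1,w2,w3⟩,⟨w4,w5,w6,w7⟩⟩ := u'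
  obtain ⟨⟨z0,z1,z2,z3⟩,⟨z4,z5,z6,z7⟩⟩ := v'
  obtain ⟨⟨x0,x1,x2,x3⟩,⟨x4,x5,x6,x7⟩⟩ := x
  obtain ⟨⟨y0,y1,y2,y3⟩,⟨y4,y5,y6,y7⟩⟩ := y
  have hu0 : u0 = 0 := isim_re hu
  subst hu0
  have hv0 : v0 = 0 := isim_re hv
  subst hv0
  have hw0 : w0 = 0 := isim_re hu'
  subst hw0
  have hz0 : z0 = 0 := isim_re hv'
  subst hz0
  have hp0 := congrArg (fun p : Oct => (Prod.fst p).re) hprod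
  have hp1 := congrArg (fun p : Oct => (Prod.fst p).imI) hprod
  have hp2 := congrArg (fun p : Oct => (Prod.fst p).imJ) hprod
  have hp3 := congrArg (fun p : Oct => (Prod.fst p).imK) hprod
  have hp4 := congrArg (fun p : Oct => (Prod.snd p).re) hprod
  have hp5 := congrArg (fun p : Oct => (Prod.snd p).imI) hprod
  have hp6 := congrArg (fun p : Oct => (Prod.snd p).imJ) hprod
  have hp7 := congrArg (fun p : Oct => (Prod.snd p).imK) hprod
  simp only [oct_mk_qH, qH_re, qH_imI, qH_imJ, qH_imK, omul_def, oconj_def, ore_def, oneg_def, oadd_def, osub_def, osmul_def, oinner, N, Quaternion.re_mul, Quaternion.imI_mul, Quaternion.imJ_mul, Quaternion.imK_mul, Quaternion.re_star, Quaternion.imI_star, Quaternion.imJ_star, Quaternion.imK_star, Quaternion.re_neg, Quaternion.imI_neg, Quaternion.imJ_neg, Quaternion.imK_neg, Quaternion.re_add, Quaternion.imI_add, Quaternion.imJ_add, Quaternion.imK_add, Quaternion.re_sub, Quaternion.imI_sub, Quaternion.imJ_sub, Quaternion.imK_sub, Quaternion.re_smul, Quaternion.imI_smul, Quaternion.imJ_smul,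 Quaternion.imK_smul, smul_eq_mul, oeq_iff] at nu nv nu' nv' huv huv' hp0 hp1 hp2 hp3 hp4 hp5 hp6 hp7 ⊢
  rename' nu' => nw, nv' => nz, huv' => hw
  refine ⟨⟨?_,?_,?_,?_⟩,?_,?_,?_,?_⟩
  · linear_combination (0:ℝ) * nu
  · linear_combination (1 * x4 * y7 + -1 * x5 * y6 + 1 * x6 * y5 + -1 * x7 * y4) * hp2 +
          (-1 * x4 * y6 + -1 * x5 * y7 + 1 * x6 * y4 + 1 * x7 * y5) * hp3 +
          (-1 * x2 * y7 + 1 * x3 * y6 + -1 * x6 * y3 + 1 * x7 * y2) * hp4 +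
          (1 * x2 * y6 + 1 * x3 * y7 + -1 * x6 * y2 + -1 * x7 * y3) * hp5 +
          (-1 * x2 * y5 + -1 * x3 * y4 + 1 * x4 * y3 + 1 * x5 * y2) * hp6 +
          (1 * x2 * y4 + -1 * x3 * y5 + -1 * x4 * y2 + 1 * x5 * y3) * hp7
  · linear_combination (-1 * x4 * y7 + 1 * x5 * y6 + -1 * x6 * y5 + 1 * x7 * y4) * hp1 +
          (1 * x4 * y5 + -1 * x5 * y4 + -1 * x6 * y7 + 1 * x7 * y6) * hp3 +
          (1 * x1 * y7 + -1 * x3 * y5 + 1 * x5 * y3 + -1 * x7 * y1) * hp4 +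
          (-1 * x1 * y6 + 1 * x3 * y4 + -1 * x4 * y3 + 1 * x6 * y1) * hp5 +
          (1 * x1 * y5 + 1 * x3 * y7 + -1 * x5 * y1 + -1 * x7 * y3) * hp6 +
          (-1 * x1 * y4 + -1 * x3 * y6 + 1 * x4 * y1 + 1 * x6 * y3) * hp7
  · linear_combination (1 * x4 * y6 + 1 * x5 * y7 + -1 * x6 * y4 + -1 * x7 * y5) * hp1 +
          (-1 * x4 * y5 + 1 * x5 * y4 + 1 * x6 * y7 + -1 * x7 * y6) * hp2 +
          (-1 * x1 * y6 + 1 * x2 * y5 + -1 * x5 * y2 + 1 * x6 * y1) * hp4 +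
          (-1 * x1 * y7 + -1 * x2 * y4 + 1 * x4 * y2 + 1 * x7 * y1) * hp5 +
          (1 * x1 * y4 + -1 * x2 * y7 + -1 * x4 * y1 + 1 * x7 * y2) * hp6 +
          (1 * x1 * y5 + 1 * x2 * y6 + -1 * x5 * y1 + -1 * x6 * y2) * hp7
  · linear_combination (1 * x2 * y7 + -1 * x3 * y6 + 1 * x6 * y3 + -1 * x7 * y2) * hp1 +
          (-1 * x1 * y7 + 1 * x3 * y5 + -1 * x5 * y3 + 1 * x7 * y1) * hp2 +
          (1 * x1 * y6 + -1 * x2 * y5 + 1 * x5 * y2 + -1 * x6 * y1) * hp3 +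
          (1 * x2 * y3 + -1 * x3 * y2 + -1 * x6 * y7 + 1 * x7 * y6) * hp5 +
          (-1 * x1 * y3 + 1 * x3 * y1 + 1 * x5 * y7 + -1 * x7 * y5) * hp6 +
          (1 * x1 * y2 + -1 * x2 * y1 + -1 * x5 * y6 + 1 * x6 * y5) * hp7
  · linear_combination (-1 * x2 * y6 + -1 * x3 * y7 + 1 * x6 * y2 + 1 * x7 * y3) * hp1 +
          (1 * x1 * y6 + -1 * x3 * y4 + 1 * x4 * y3 + -1 * x6 * y1) * hp2 +
          (1 * x1 * y7 + 1 * x2 * y4 + -1 * x4 * y2 + -1 * x7 * y1) * hp3 +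
          (-1 * x2 * y3 + 1 * x3 * y2 + 1 * x6 * y7 + -1 * x7 * y6) * hp4 +
          (-1 * x1 * y2 + 1 * x2 * y1 + -1 * x4 * y7 + 1 * x7 * y4) * hp6 +
          (-1 * x1 * y3 + 1 * x3 * y1 + 1 * x4 * y6 + -1 * x6 * y4) * hp7
  · linear_combination (1 * x2 * y5 + 1 * x3 * y4 + -1 * x4 * y3 + -1 * x5 * y2) * hp1 +
          (-1 * x1 * y5 + -1 * x3 * y7 + 1 * x5 * y1 + 1 * x7 * y3) * hp2 +
          (-1 * x1 * y4 + 1 * x2 * y7 + 1 * x4 * y1 + -1 * x7 * y2) * hp3 +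
          (1 * x1 * y3 + -1 * x3 * y1 + -1 * x5 * y7 + 1 * x7 * y5) * hp4 +
          (1 * x1 * y2 + -1 * x2 * y1 + 1 * x4 * y7 + -1 * x7 * y4) * hp5 +
          (-1 * x2 * y3 + 1 * x3 * y2 + -1 * x4 * y5 + 1 * x5 * y4) * hp7
  · linear_combination (-1 * x2 * y4 + 1 * x3 * y5 + 1 * x4 * y2 + -1 * x5 * y3) * hp1 +
          (1 * x1 * y4 + 1 * x3 * y6 + -1 * x4 * y1 + -1 * x6 * y3) * hp2 +
          (-1 * x1 * y5 + -1 * x2 * y6 + 1 * x5 * y1 + 1 * x6 * y2) * hp3 +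
          (-1 * x1 * y2 + 1 * x2 * y1 + 1 * x5 * y6 + -1 * x6 * y5) * hp4 +
          (1 * x1 * y3 + -1 * x3 * y1 + -1 * x4 * y6 + 1 * x6 * y4) * hp5 +
          (1 * x2 * y3 + -1 * x3 * y2 + 1 * x4 * y5 + -1 * x5 * y4) * hp6
end
end
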